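/- Let g be a simple Lie algebra with sl2-triple {f,2x,e} where f is a short nilpotent (ad(x)-eigenvalues -1,0,1). Then in g((z⁻¹)) the element f + ze is ad-semisimple, with Ker ad(f+ze) = g₀^f((z⁻¹)) ⊕ ((ad f)² - 2z)g₁((z⁻¹)) and Im ad(f+ze) = [f,g₁]((z⁻¹)) ⊕ ((ad f)² + 2z)g₁((z⁻¹)), and these two subspaces give a direct sum decomposition of g((z⁻¹)). -/

import Mathlib

open scoped TensorProduct

attribute [-instance] HahnSeries.instModule

set_option maxHeartbeats 1000000

set_option maxHeartbeats 8000000 in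
/-- For a short nilpotent f, the element f + ze of g((z⁻¹)) is ad-semisimple,
with kernel g₀^f((z⁻¹)) ⊕ ((ad f)² - 2z)g₁((z⁻¹)) and image
[f,g₁]((z⁻¹)) ⊕ ((ad f)² + 2z)g₁((z⁻¹)), and these give a direct sum
decomposition of g((z⁻¹)). -/
theorem stmt8 {F : Type*} [Field F] [CharZero F] [IsAlgClosed F]
    {g : Type*} [LieRing g] [LieAlgebra F g] [FiniteDimensional F g]
    [LieAlgebra.IsSimple F g]
    (e x f : g)
    (hef : ⁅e, f⁆ = (2 : F) • x) (hxe : ⁅x, e⁆ = e) (hxf : ⁅x, f⁆ = -f)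
    (hdec : ∀ y : g, ∃ ym y0 y1 : g, ⁅x, ym⁆ = -ym ∧ ⁅x, y0⁆ = 0 ∧ ⁅x, y1⁆ = y1 ∧
      y = ym + y0 + y1)
    (z : LaurentSeries F) (hz : z = HahnSeries.single (-1) 1)
    (Λ : LaurentSeries F ⊗[F] g)
    (hΛ : Λ = (1 : LaurentSeries F) ⊗ₜ[F] f + z ⊗ₜ[F] e)
    (Hk Hr : Submodule (LaurentSeries F) (LaurentSeries F ⊗[F] g))
    (hHk : Hk = Submodule.span (LaurentSeries F)
      ({w | ∃ a : g, ⁅x, a⁆ = 0 ∧ ⁅f, a⁆ = 0 ∧ w = (1 : LaurentSeries F) ⊗ₜ[F] a}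
        ∪ {w | ∃ v : g, ⁅x, v⁆ = v ∧
            w = (1 : LaurentSeries F) ⊗ₜ[F] ⁅f, ⁅f, v⁆⁆
              - ((2 : LaurentSeries F) * z) • ((1 : LaurentSeries F) ⊗ₜ[F] v)}))
    (hHr : Hr = Submodule.span (LaurentSeries F)
      ({w | ∃ v : g, ⁅x, v⁆ = v ∧ w = (1 : LaurentSeries F) ⊗ₜ[F] ⁅f, v⁆}
        ∪ {w | ∃ v : g, ⁅x, v⁆ = v ∧
            w = (1 : LaurentSeries F) ⊗ₜ[F] ⁅f, ⁅f, v⁆⁆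
              + ((2 : LaurentSeries F) * z) • ((1 : LaurentSeries F) ⊗ₜ[F] v)})) :
    (LieAlgebra.ad (LaurentSeries F) (LaurentSeries F ⊗[F] g) Λ).IsSemisimple ∧
    LinearMap.ker (LieAlgebra.ad (LaurentSeries F) (LaurentSeries F ⊗[F] g) Λ) = Hk ∧
    LinearMap.range (LieAlgebra.ad (LaurentSeries F) (LaurentSeries F ⊗[F] g) Λ) = Hr ∧
    IsCompl Hk Hr := by
  -- Notation
  haveI : CharZero (LaurentSeries F) := charZero_of_injective_algebraMap (algebraMap F (LaurentSeries F)).injective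
  have hzne : z ≠ 0 := by
    rw [hz]; exact HahnSeries.single_ne_zero one_ne_zero
  have h2z : (2 : (LaurentSeries F)) * z ≠ 0 := mul_ne_zero two_ne_zero hzne
  -- Step 0: eigenvector lemmas in g
  have h3zero : ∀ a b c : g, ⁅x, a⁆ = -a → ⁅x, b⁆ = 0 → ⁅x, c⁆ = c →
      a + b + c = 0 → a = 0 ∧ b = 0 ∧ c = 0 := by
    intro a b c ha hb hc h
    have h1 : -a + c = 0 := by
      have := congrArg (fun y => ⁅x, y⁆) h
      simpa [ha, hb, hc] using this
    have h2 : a + c = 0 := by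
      have := congrArg (fun y => ⁅x, y⁆) h1
      simpa [ha, hc] using this
    have hca : c = a := by
      have hsub : c - a = 0 := by rw [sub_eq_neg_add]; exact h1
      exact sub_eq_zero.mp hsub
    have ha2 : (2 : F) • a = 0 := by
      rw [two_smul]; rw [hca] at h2; exact h2
    have ha0 : a = 0 := by
      have := congrArg (fun w => (2 : F)⁻¹ • w) ha2
      simpa [inv_smul_smul₀ (two_ne_zero (α := F))] using this
    refine ⟨ha0, ?_, ?_⟩
    · have := h; rw [ha0, hca, ha0] at this; simpa using this
    · rw [hca, ha0]
  have hEigc : ∀ c : F, c + 1 ≠ 0 → c ≠ 0 → c - 1 ≠ 0 →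
      ∀ y : g, ⁅x, y⁆ = c • y → y = 0 := by
    intro c hc1 hc0 hc2 y hy
    obtain ⟨ym, y0, y1, hm, h0, h1, hyd⟩ := hdec y
    have heq : -ym + y1 = c • ym + c • y0 + c • y1 := by
      have := hy
      rw [hyd] at this
      simp only [lie_add, hm, h0, h1, smul_add] at this
      simpa using this
    have key : ((c + 1) • ym) + (c • y0) + ((c - 1) • y1)
        = (c • ym + c • y0 + c • y1) + (ym - y1) := by
      rw [add_smul, sub_smul, one_smul]; abel_nf; module
    rw [← heq] at key
    have hzero : ((c + 1) • ym) + (c • y0) + ((c - 1) • y1) = 0 := by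
      rw [key]; abel
    have e1 : ⁅x, (c + 1) • ym⁆ = -((c + 1) • ym) := by rw [lie_smul, hm, smul_neg]
    have e2 : ⁅x, c • y0⁆ = 0 := by rw [lie_smul, h0, smul_zero]
    have e3 : ⁅x, (c - 1) • y1⁆ = (c - 1) • y1 := by rw [lie_smul, h1]
    obtain ⟨z1, z2, z3⟩ := h3zero _ _ _ e1 e2 e3 hzero
    have hym : ym = 0 := by
      have := congrArg (fun w => (c + 1)⁻¹ • w) z1
      simpa [inv_smul_smul₀ hc1] using this
    have hy0 : y0 = 0 := by
      have := congrArg (fun w => c⁻¹ • w) z2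
      simpa [inv_smul_smul₀ hc0] using this
    have hy1 : y1 = 0 := by
      have := congrArg (fun w => (c - 1)⁻¹ • w) z3
      simpa [inv_smul_smul₀ hc2] using this
    rw [hyd, hym, hy0, hy1]; simp
  have hEig2 : ∀ y : g, ⁅x, y⁆ = (2 : F) • y → y = 0 := by
    refine hEigc 2 ?_ ?_ ?_ <;> norm_num
  have hEigm2 : ∀ y : g, ⁅x, y⁆ = (-2 : F) • y → y = 0 := by
    refine hEigc (-2) ?_ ?_ ?_ <;> norm_num
  -- Step 1: structural sl2 facts
  have hfe : ⁅f, e⁆ = -((2 : F) • x) := by rw [← lie_skew, hef]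
  have hev : ∀ v : g, ⁅x, v⁆ = v → ⁅e, v⁆ = 0 := by
    intro v hv
    apply hEig2
    rw [leibniz_lie, hxe, hv, two_smul]
  have hfa : ∀ a : g, ⁅x, a⁆ = -a → ⁅f, a⁆ = 0 := by
    intro a ha
    apply hEigm2
    rw [leibniz_lie, hxf, ha, neg_lie, lie_neg, neg_smul, two_smul]
    abel
  have hxfv : ∀ v : g, ⁅x, v⁆ = v → ⁅x, ⁅f, v⁆⁆ = 0 := by
    intro v hv
    rw [leibniz_lie, hxf, hv, neg_lie]; abel
  have hxffv : ∀ v : g, ⁅x, v⁆ = v → ⁅x, ⁅f, ⁅f, v⁆⁆⁆ = -⁅f, ⁅f, v⁆⁆ := by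
    intro v hv
    rw [leibniz_lie, hxf, hxfv v hv, lie_zero, add_zero, neg_lie]
  have hfffv : ∀ v : g, ⁅x, v⁆ = v → ⁅f, ⁅f, ⁅f, v⁆⁆⁆ = 0 := by
    intro v hv
    exact hfa _ (hxffv v hv)
  have hefv : ∀ v : g, ⁅x, v⁆ = v → ⁅e, ⁅f, v⁆⁆ = (2 : F) • v := by
    intro v hv
    rw [leibniz_lie, hef, hev v hv, lie_zero, add_zero, smul_lie, hv]
  have heffv : ∀ v : g, ⁅x, v⁆ = v → ⁅e, ⁅f, ⁅f, v⁆⁆⁆ = (2 : F) • ⁅f, v⁆ := by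
    intro v hv
    rw [leibniz_lie, hef, hefv v hv, lie_smul, smul_lie, hxfv v hv, smul_zero, zero_add]
  have hfea : ∀ a : g, ⁅x, a⁆ = -a → ⁅f, ⁅e, a⁆⁆ = (2 : F) • a := by
    intro a ha
    rw [leibniz_lie, hfe, hfa a ha, lie_zero, add_zero, neg_lie, smul_lie, ha, smul_neg, neg_neg]
  have hea : ∀ a : g, ⁅x, a⁆ = 0 → ⁅f, a⁆ = 0 → ⁅e, a⁆ = 0 := by
    intro a hx0 hf0
    have hxea : ⁅x, ⁅e, a⁆⁆ = ⁅e, a⁆ := by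
      rw [leibniz_lie, hxe, hx0, lie_zero, add_zero]
    have hfea0 : ⁅f, ⁅e, a⁆⁆ = 0 := by
      rw [leibniz_lie, hfe, hf0, lie_zero, add_zero, neg_lie, smul_lie, hx0, smul_zero, neg_zero]
    have := hefv _ hxea
    rw [hfea0, lie_zero] at this
    have := congrArg (fun w => (2 : F)⁻¹ • w) this.symm
    simpa [inv_smul_smul₀ (two_ne_zero (α := F))] using this
  -- decomposition of weight-0 elements
  have hdec0 : ∀ u : g, ⁅x, u⁆ = 0 →
      ∃ a v : g, ⁅x, a⁆ = 0 ∧ ⁅f, a⁆ = 0 ∧ ⁅x, v⁆ = v ∧ u = a + ⁅f, v⁆ := by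
    intro u hu
    have hxeu : ⁅x, ⁅e, u⁆⁆ = ⁅e, u⁆ := by
      rw [leibniz_lie, hxe, hu, lie_zero, add_zero]
    set v : g := (2 : F)⁻¹ • ⁅e, u⁆ with hvdef
    have hv : ⁅x, v⁆ = v := by rw [hvdef, lie_smul, hxeu]
    have hxfu : ⁅x, ⁅f, u⁆⁆ = -⁅f, u⁆ := by
      rw [leibniz_lie, hxf, hu, lie_zero, add_zero, neg_lie]
    have hffeu : ⁅f, ⁅f, ⁅e, u⁆⁆⁆ = (2 : F) • ⁅f, u⁆ := by
      have h1 : ⁅f, ⁅e, u⁆⁆ = ⁅e, ⁅f, u⁆⁆ := by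
        rw [leibniz_lie, hfe, neg_lie, smul_lie, hu, smul_zero, neg_zero, zero_add]
      rw [h1]
      exact hfea _ hxfu
    refine ⟨u - ⁅f, v⁆, v, ?_, ?_, hv, by abel⟩
    · rw [lie_sub, hu, hxfv v hv, sub_zero]
    · rw [lie_sub, hvdef, lie_smul, lie_smul, hffeu, smul_smul,
        inv_mul_cancel₀ (two_ne_zero (α := F)), one_smul, sub_self]
  have hdecm : ∀ w : g, ⁅x, w⁆ = -w → ∃ v : g, ⁅x, v⁆ = v ∧ w = ⁅f, ⁅f, v⁆⁆ := by
    intro w hw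
    have hc : ⁅x, ⁅e, w⁆⁆ = 0 := by
      rw [leibniz_lie, hxe, hw, lie_neg]; abel
    obtain ⟨a, v, ha0, haf, hv, hcd⟩ := hdec0 ⁅e, w⁆ hc
    have h1 : ⁅f, ⁅e, w⁆⁆ = (2 : F) • w := hfea w hw
    have h2 : ⁅f, ⁅f, v⁆⁆ = (2 : F) • w := by
      rw [← h1, hcd, lie_add, haf, zero_add]
    refine ⟨(2 : F)⁻¹ • v, by rw [lie_smul, hv], ?_⟩
    rw [lie_smul, lie_smul, h2, smul_smul, inv_mul_cancel₀ (two_ne_zero (α := F)), one_smul]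
  have hdec4 : ∀ y : g, ∃ a v1 v2 v3 : g, ⁅x, a⁆ = 0 ∧ ⁅f, a⁆ = 0 ∧ ⁅x, v1⁆ = v1 ∧
      ⁅x, v2⁆ = v2 ∧ ⁅x, v3⁆ = v3 ∧ y = a + v1 + ⁅f, v2⁆ + ⁅f, ⁅f, v3⁆⁆ := by
    intro y
    obtain ⟨ym, y0, y1, hm, h0, h1, hyd⟩ := hdec y
    obtain ⟨v3, hv3, hym⟩ := hdecm ym hm
    obtain ⟨a, v2, ha0, haf, hv2, hy0⟩ := hdec0 y0 h0
    exact ⟨a, y1, v2, v3, ha0, haf, h1, hv2, hv3, by rw [hyd, hym, hy0]; abel⟩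
  -- Step 2: the operator T
  set T : Module.End (LaurentSeries F) ((LaurentSeries F) ⊗[F] g) := LieAlgebra.ad (LaurentSeries F) ((LaurentSeries F) ⊗[F] g) Λ with hTdef
  have hsm2 : ∀ m : (LaurentSeries F) ⊗[F] g, (2 : F) • m = (2 : (LaurentSeries F)) • m := by
    intro m
    rw [← algebraMap_smul (LaurentSeries F) (2 : F) m, map_ofNat]
  have htsm : ∀ (cF : F) (v : g), (1 : LaurentSeries F) ⊗ₜ[F] (cF • v)
      = cF • ((1 : LaurentSeries F) ⊗ₜ[F] v) :=
    fun cF v => map_smul (TensorProduct.mk F (LaurentSeries F) g 1) cF v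
  have hT : ∀ y : g, T ((1 : (LaurentSeries F)) ⊗ₜ[F] y)
      = (1 : (LaurentSeries F)) ⊗ₜ[F] ⁅f, y⁆ + z • ((1 : (LaurentSeries F)) ⊗ₜ[F] ⁅e, y⁆) := by
    intro y
    rw [hTdef, LieAlgebra.ad_apply, hΛ,
      add_lie ((1 : LaurentSeries F) ⊗ₜ[F] f) (z ⊗ₜ[F] e) ((1 : LaurentSeries F) ⊗ₜ[F] y),
      LieAlgebra.ExtendScalars.bracket_tmul F (LaurentSeries F) g g 1 1 f y,
      LieAlgebra.ExtendScalars.bracket_tmul F (LaurentSeries F) g g z 1 e y,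
      one_mul, mul_one, TensorProduct.smul_tmul', smul_eq_mul, mul_one]
  have hTa : ∀ a : g, ⁅x, a⁆ = 0 → ⁅f, a⁆ = 0 → T ((1 : (LaurentSeries F)) ⊗ₜ[F] a) = 0 := by
    intro a hx0 hf0
    rw [hT, hf0, hea a hx0 hf0]
    simp
  have hTv : ∀ v : g, ⁅x, v⁆ = v → T ((1 : (LaurentSeries F)) ⊗ₜ[F] v) = (1 : (LaurentSeries F)) ⊗ₜ[F] ⁅f, v⁆ := by
    intro v hv
    rw [hT, hev v hv, TensorProduct.tmul_zero, smul_zero, add_zero]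
  have hTfv : ∀ v : g, ⁅x, v⁆ = v → T ((1 : (LaurentSeries F)) ⊗ₜ[F] ⁅f, v⁆)
      = (1 : (LaurentSeries F)) ⊗ₜ[F] ⁅f, ⁅f, v⁆⁆ + ((2 : (LaurentSeries F)) * z) • ((1 : (LaurentSeries F)) ⊗ₜ[F] v) := by
    intro v hv
    rw [hT, hefv v hv, htsm, hsm2,
      smul_smul z (2 : (LaurentSeries F)) ((1 : (LaurentSeries F)) ⊗ₜ[F] v), mul_comm z 2]
  have hTffv : ∀ v : g, ⁅x, v⁆ = v → T ((1 : (LaurentSeries F)) ⊗ₜ[F] ⁅f, ⁅f, v⁆⁆)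
      = ((2 : (LaurentSeries F)) * z) • ((1 : (LaurentSeries F)) ⊗ₜ[F] ⁅f, v⁆) := by
    intro v hv
    rw [hT, hfffv v hv, heffv v hv, TensorProduct.tmul_zero, zero_add,
      htsm, hsm2, smul_smul z (2 : (LaurentSeries F)) ((1 : (LaurentSeries F)) ⊗ₜ[F] ⁅f, v⁆), mul_comm z 2]
  -- spanning principle
  have huniv : ∀ P : Submodule (LaurentSeries F) ((LaurentSeries F) ⊗[F] g),
      (∀ y : g, ((1 : (LaurentSeries F)) ⊗ₜ[F] y) ∈ P) → ∀ m : (LaurentSeries F) ⊗[F] g, m ∈ P := by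
    intro P hP m
    induction m using TensorProduct.induction_on with
    | zero => exact P.zero_mem
    | tmul c y =>
      have hc : c ⊗ₜ[F] y = c • ((1 : (LaurentSeries F)) ⊗ₜ[F] y) := by
        rw [TensorProduct.smul_tmul', smul_eq_mul, mul_one]
      rw [hc]; exact P.smul_mem c (hP y)
    | add u v hu hv => exact P.add_mem hu hv
  -- generators
  have hgenk1 : ∀ a : g, ⁅x, a⁆ = 0 → ⁅f, a⁆ = 0 → ((1 : (LaurentSeries F)) ⊗ₜ[F] a) ∈ Hk := by
    intro a h1 h2
    rw [hHk]
    exact Submodule.subset_span (Or.inl ⟨a, h1, h2, rfl⟩)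
  have hgenk2 : ∀ v : g, ⁅x, v⁆ = v →
      ((1 : (LaurentSeries F)) ⊗ₜ[F] ⁅f, ⁅f, v⁆⁆ - ((2 : (LaurentSeries F)) * z) • ((1 : (LaurentSeries F)) ⊗ₜ[F] v)) ∈ Hk := by
    intro v hv
    rw [hHk]
    exact Submodule.subset_span (Or.inr ⟨v, hv, rfl⟩)
  have hgenr1 : ∀ v : g, ⁅x, v⁆ = v → ((1 : (LaurentSeries F)) ⊗ₜ[F] ⁅f, v⁆) ∈ Hr := by
    intro v hv
    rw [hHr]
    exact Submodule.subset_span (Or.inl ⟨v, hv, rfl⟩)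
  have hgenr2 : ∀ v : g, ⁅x, v⁆ = v →
      ((1 : (LaurentSeries F)) ⊗ₜ[F] ⁅f, ⁅f, v⁆⁆ + ((2 : (LaurentSeries F)) * z) • ((1 : (LaurentSeries F)) ⊗ₜ[F] v)) ∈ Hr := by
    intro v hv
    rw [hHr]
    exact Submodule.subset_span (Or.inr ⟨v, hv, rfl⟩)
  -- membership of basic tensors in Hk ⊔ Hr
  have hmemv : ∀ v : g, ⁅x, v⁆ = v → ((1 : (LaurentSeries F)) ⊗ₜ[F] v) ∈ Hk ⊔ Hr := by
    intro v hv
    have hk := Submodule.mem_sup_left (T := Hr) (hgenk2 v hv)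
    have hr := Submodule.mem_sup_right (S := Hk) (hgenr2 v hv)
    have hsub := Submodule.sub_mem _ hr hk
    have heq : ((1 : (LaurentSeries F)) ⊗ₜ[F] ⁅f, ⁅f, v⁆⁆ + ((2 : (LaurentSeries F)) * z) • ((1 : (LaurentSeries F)) ⊗ₜ[F] v))
        - ((1 : (LaurentSeries F)) ⊗ₜ[F] ⁅f, ⁅f, v⁆⁆ - ((2 : (LaurentSeries F)) * z) • ((1 : (LaurentSeries F)) ⊗ₜ[F] v))
        = ((2 : (LaurentSeries F)) * ((2 : (LaurentSeries F)) * z)) • ((1 : (LaurentSeries F)) ⊗ₜ[F] v) := by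
      rw [mul_smul (2 : (LaurentSeries F)) ((2 : (LaurentSeries F)) * z) ((1 : (LaurentSeries F)) ⊗ₜ[F] v),
        two_smul (LaurentSeries F) (((2 : (LaurentSeries F)) * z) • ((1 : (LaurentSeries F)) ⊗ₜ[F] v))]
      abel
    rw [heq] at hsub
    have := Submodule.smul_mem (Hk ⊔ Hr) ((2 : (LaurentSeries F)) * ((2 : (LaurentSeries F)) * z))⁻¹ hsub
    rwa [inv_smul_smul₀ (mul_ne_zero two_ne_zero h2z)] at this
  have hmemffv : ∀ v : g, ⁅x, v⁆ = v → ((1 : (LaurentSeries F)) ⊗ₜ[F] ⁅f, ⁅f, v⁆⁆) ∈ Hk ⊔ Hr := by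
    intro v hv
    have hk := Submodule.mem_sup_left (T := Hr) (hgenk2 v hv)
    have hr := Submodule.mem_sup_right (S := Hk) (hgenr2 v hv)
    have hadd := Submodule.add_mem _ hk hr
    have heq : ((1 : (LaurentSeries F)) ⊗ₜ[F] ⁅f, ⁅f, v⁆⁆ - ((2 : (LaurentSeries F)) * z) • ((1 : (LaurentSeries F)) ⊗ₜ[F] v))
        + ((1 : (LaurentSeries F)) ⊗ₜ[F] ⁅f, ⁅f, v⁆⁆ + ((2 : (LaurentSeries F)) * z) • ((1 : (LaurentSeries F)) ⊗ₜ[F] v))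
        = (2 : (LaurentSeries F)) • ((1 : (LaurentSeries F)) ⊗ₜ[F] ⁅f, ⁅f, v⁆⁆) := by
      rw [two_smul (LaurentSeries F) ((1 : (LaurentSeries F)) ⊗ₜ[F] ⁅f, ⁅f, v⁆⁆)]
      abel
    rw [heq] at hadd
    have := Submodule.smul_mem (Hk ⊔ Hr) ((2 : (LaurentSeries F)))⁻¹ hadd
    rwa [inv_smul_smul₀ (two_ne_zero (α := (LaurentSeries F)))] at this
  have htop : Hk ⊔ Hr = ⊤ := by
    rw [eq_top_iff]
    intro m _
    refine huniv (Hk ⊔ Hr) (fun y => ?_) m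
    obtain ⟨a, v1, v2, v3, ha0, haf, hv1, hv2, hv3, hy⟩ := hdec4 y
    rw [hy, TensorProduct.tmul_add, TensorProduct.tmul_add, TensorProduct.tmul_add]
    refine Submodule.add_mem _ (Submodule.add_mem _ (Submodule.add_mem _ ?_ ?_) ?_) ?_
    · exact Submodule.mem_sup_left (hgenk1 a ha0 haf)
    · exact hmemv v1 hv1
    · exact Submodule.mem_sup_right (hgenr1 v2 hv2)
    · exact hmemffv v3 hv3
  -- Hk ⊆ ker T, Hr ⊆ range T, T(Hr) ⊆ Hr
  have hkker : Hk ≤ LinearMap.ker T := by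
    rw [hHk, Submodule.span_le]
    rintro w (⟨a, h1, h2, rfl⟩ | ⟨v, hv, rfl⟩)
    · exact LinearMap.mem_ker.mpr (hTa a h1 h2)
    · refine LinearMap.mem_ker.mpr ?_
      rw [map_sub, map_smul, hTffv v hv, hTv v hv, sub_self]
  have hrrange : Hr ≤ LinearMap.range T := by
    rw [hHr, Submodule.span_le]
    rintro w (⟨v, hv, rfl⟩ | ⟨v, hv, rfl⟩)
    · exact ⟨(1 : (LaurentSeries F)) ⊗ₜ[F] v, hTv v hv⟩
    · exact ⟨(1 : (LaurentSeries F)) ⊗ₜ[F] ⁅f, v⁆, hTfv v hv⟩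
  have hTHr : ∀ w ∈ Hr, T w ∈ Hr := by
    have hmap : Hr.map T ≤ Hr := by
      conv_lhs => rw [hHr]
      rw [Submodule.map_span, Submodule.span_le]
      rintro w ⟨s, (⟨v, hv, rfl⟩ | ⟨v, hv, rfl⟩), rfl⟩
      · rw [SetLike.mem_coe, hTfv v hv]
        exact hgenr2 v hv
      · rw [SetLike.mem_coe, map_add, map_smul, hTffv v hv, hTv v hv]
        exact Submodule.add_mem _ (Submodule.smul_mem _ _ (hgenr1 v hv))
          (Submodule.smul_mem _ _ (hgenr1 v hv))
    intro w hw
    exact hmap ⟨w, hw, rfl⟩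
  -- cubic relation T³ = (4z) T
  have hcubic : ∀ m : (LaurentSeries F) ⊗[F] g,
      T (T (T m)) = ((4 : (LaurentSeries F)) * z) • T m := by
    have hbase : ∀ m : (LaurentSeries F) ⊗[F] g, m ∈ LinearMap.ker
        ((T ∘ₗ (T ∘ₗ T)) - ((4 : (LaurentSeries F)) * z) • T) := by
      have happ : ∀ m : (LaurentSeries F) ⊗[F] g,
          ((T ∘ₗ (T ∘ₗ T)) - ((4 : (LaurentSeries F)) * z) • T) m
            = T (T (T m)) - ((4 : (LaurentSeries F)) * z) • T m := fun m => by
        simp only [LinearMap.sub_apply, LinearMap.smul_apply, LinearMap.coe_comp,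
          Function.comp_apply]
      have hkv : ∀ v : g, ⁅x, v⁆ = v →
          T (T (T ((1:(LaurentSeries F)) ⊗ₜ[F] v)))
            = ((4 : (LaurentSeries F)) * z) • T ((1:(LaurentSeries F)) ⊗ₜ[F] v) := by
        intro v hv
        rw [hTv v hv, hTfv v hv, map_add, map_smul, hTffv v hv, hTv v hv,
          ← add_smul ((2 : (LaurentSeries F)) * z) ((2 : (LaurentSeries F)) * z) ((1 : (LaurentSeries F)) ⊗ₜ[F] ⁅f, v⁆)]
        congr 1
        ring
      have hkfv : ∀ v : g, ⁅x, v⁆ = v →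
          T (T (T ((1:(LaurentSeries F)) ⊗ₜ[F] ⁅f, v⁆)))
            = ((4 : (LaurentSeries F)) * z) • T ((1:(LaurentSeries F)) ⊗ₜ[F] ⁅f, v⁆) := by
        intro v hv
        have h1 := congrArg T (hkv v hv)
        rw [map_smul, hTv v hv] at h1
        exact h1
      have hkffv : ∀ v : g, ⁅x, v⁆ = v →
          T (T (T ((1:(LaurentSeries F)) ⊗ₜ[F] ⁅f, ⁅f, v⁆⁆)))
            = ((4 : (LaurentSeries F)) * z) • T ((1:(LaurentSeries F)) ⊗ₜ[F] ⁅f, ⁅f, v⁆⁆) := by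
        intro v hv
        have e0 : (1:(LaurentSeries F)) ⊗ₜ[F] ⁅f, ⁅f, v⁆⁆
            = T ((1:(LaurentSeries F)) ⊗ₜ[F] ⁅f, v⁆)
              - ((2 : (LaurentSeries F)) * z) • ((1:(LaurentSeries F)) ⊗ₜ[F] v) := by
          rw [hTfv v hv]; abel
        have h4 : T (T (T (T ((1:(LaurentSeries F)) ⊗ₜ[F] ⁅f, v⁆))))
            = ((4 : (LaurentSeries F)) * z) • T (T ((1:(LaurentSeries F)) ⊗ₜ[F] ⁅f, v⁆)) := by
          have := congrArg T (hkfv v hv)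
          rwa [map_smul] at this
        rw [e0]
        simp only [map_sub, map_smul]
        rw [h4, hkv v hv,
          smul_sub ((4 : (LaurentSeries F)) * z) (T (T ((1 : (LaurentSeries F)) ⊗ₜ[F] ⁅f, v⁆)))
            (((2 : (LaurentSeries F)) * z) • T ((1 : (LaurentSeries F)) ⊗ₜ[F] v)),
          smul_smul ((2 : (LaurentSeries F)) * z) ((4 : (LaurentSeries F)) * z) (T ((1 : (LaurentSeries F)) ⊗ₜ[F] v)),
          smul_smul ((4 : (LaurentSeries F)) * z) ((2 : (LaurentSeries F)) * z) (T ((1 : (LaurentSeries F)) ⊗ₜ[F] v)),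
          mul_comm ((2 : (LaurentSeries F)) * z) ((4 : (LaurentSeries F)) * z)]
      refine huniv _ (fun y => ?_)
      obtain ⟨a, v1, v2, v3, ha0, haf, hv1, hv2, hv3, hy⟩ := hdec4 y
      refine LinearMap.mem_ker.mpr ?_
      rw [happ, hy, TensorProduct.tmul_add, TensorProduct.tmul_add, TensorProduct.tmul_add]
      simp only [map_add, smul_add]
      have e1 : T (T (T ((1:(LaurentSeries F)) ⊗ₜ[F] a))) = 0 := by
        rw [hTa a ha0 haf, map_zero, map_zero]
      have e1' : T ((1:(LaurentSeries F)) ⊗ₜ[F] a) = 0 := hTa a ha0 haf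
      rw [e1, e1', hkv v1 hv1, hkfv v2 hv2, hkffv v3 hv3]
      simp only [smul_zero]
      abel
    intro m
    have := hbase m
    rw [LinearMap.mem_ker] at this
    have happ : ((T ∘ₗ (T ∘ₗ T)) - ((4 : (LaurentSeries F)) * z) • T) m
        = T (T (T m)) - ((4 : (LaurentSeries F)) * z) • T m := by
      simp only [LinearMap.sub_apply, LinearMap.smul_apply, LinearMap.coe_comp,
        Function.comp_apply]
    rw [happ] at this
    exact sub_eq_zero.mp this
  have h4z : (4 : (LaurentSeries F)) * z ≠ 0 := mul_ne_zero (by norm_num : (4 : (LaurentSeries F)) ≠ 0) hzne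
  -- range ∩ ker = 0 style fact
  have hkr0 : ∀ m : (LaurentSeries F) ⊗[F] g, m ∈ LinearMap.range T → T m = 0 → m = 0 := by
    rintro m ⟨n, rfl⟩ hm
    have h1 : T (T (T n)) = 0 := by rw [hm, map_zero]
    have h2 := hcubic n
    rw [h1] at h2
    have h3 : T n = ((4 : (LaurentSeries F)) * z)⁻¹ • (((4 : (LaurentSeries F)) * z) • T n) :=
      (inv_smul_smul₀ h4z (T n)).symm
    rw [← h2, smul_zero] at h3
    exact h3
  -- kernel = Hk
  have hker : LinearMap.ker T = Hk := by
    refine le_antisymm ?_ hkker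
    intro m hm
    have hmem : m ∈ Hk ⊔ Hr := htop ▸ Submodule.mem_top
    obtain ⟨k, hk, r, hr, rfl⟩ := Submodule.mem_sup.mp hmem
    have hTk : T k = 0 := LinearMap.mem_ker.mp (hkker hk)
    have hTkr : T (k + r) = 0 := LinearMap.mem_ker.mp hm
    have hTr : T r = 0 := by
      rw [map_add, hTk, zero_add] at hTkr; exact hTkr
    have hr0 : r = 0 := hkr0 r (hrrange hr) hTr
    rw [hr0, add_zero]
    exact hk
  -- range = Hr
  have hrange : LinearMap.range T = Hr := by
    refine le_antisymm ?_ hrrange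
    rintro m ⟨n, rfl⟩
    have hmem : n ∈ Hk ⊔ Hr := htop ▸ Submodule.mem_top
    obtain ⟨k, hk, r, hr, rfl⟩ := Submodule.mem_sup.mp hmem
    have hTk : T k = 0 := LinearMap.mem_ker.mp (hkker hk)
    rw [map_add, hTk, zero_add]
    exact hTHr r hr
  -- IsCompl
  have hdisj : Disjoint Hk Hr := by
    rw [disjoint_iff]
    rw [eq_bot_iff]
    intro m hm
    have hmk : m ∈ Hk := hm.1
    have hmr : m ∈ Hr := hm.2
    have : m = 0 := hkr0 m (hrrange hmr) (LinearMap.mem_ker.mp (hkker hmk))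
    simpa [this] using Submodule.zero_mem (⊥ : Submodule (LaurentSeries F) ((LaurentSeries F) ⊗[F] g))
  have hcompl : IsCompl Hk Hr := ⟨hdisj, codisjoint_iff.mpr htop⟩
  -- semisimplicity
  have hss : T.IsSemisimple := by
    set c : (LaurentSeries F) := (4 : (LaurentSeries F)) * z with hcdef
    have hcne : c ≠ 0 := h4z
    set p : Polynomial (LaurentSeries F) := Polynomial.X ^ 3 - Polynomial.C c * Polynomial.X with hpdef
    have hder : p.derivative = Polynomial.C 3 * Polynomial.X ^ 2 - Polynomial.C c := by
      rw [hpdef]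
      simp [Polynomial.derivative_X_pow]
      rw [← Polynomial.C_1, ← Polynomial.C_add]; norm_num
    have hsep : p.Separable := by
      rw [Polynomial.Separable, hder]
      refine ⟨Polynomial.C (2 * c ^ 2)⁻¹ * (-(Polynomial.C 9) * Polynomial.X),
        Polynomial.C (2 * c ^ 2)⁻¹ * (Polynomial.C 3 * Polynomial.X ^ 2 - Polynomial.C (2 * c)), ?_⟩
      have key : (-(Polynomial.C 9) * Polynomial.X) * p
          + (Polynomial.C 3 * Polynomial.X ^ 2 - Polynomial.C (2 * c))
            * (Polynomial.C 3 * Polynomial.X ^ 2 - Polynomial.C c)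
          = Polynomial.C (2 * c ^ 2) := by
        rw [hpdef]
        have h9 : (Polynomial.C (9 : (LaurentSeries F))) = 9 := map_ofNat Polynomial.C 9
        have h3 : (Polynomial.C (3 : (LaurentSeries F))) = 3 := map_ofNat Polynomial.C 3
        have h2c : Polynomial.C (2 * c) = 2 * Polynomial.C c := by
          rw [map_mul, map_ofNat Polynomial.C 2]
        have h2c2 : Polynomial.C (2 * c ^ 2) = 2 * (Polynomial.C c) ^ 2 := by
          rw [map_mul, map_pow, map_ofNat Polynomial.C 2]
        rw [h9, h3, h2c, h2c2]
        ring
      calc Polynomial.C (2 * c ^ 2)⁻¹ * (-(Polynomial.C 9) * Polynomial.X) * p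
            + Polynomial.C (2 * c ^ 2)⁻¹ * (Polynomial.C 3 * Polynomial.X ^ 2 - Polynomial.C (2 * c))
              * (Polynomial.C 3 * Polynomial.X ^ 2 - Polynomial.C c)
          = Polynomial.C (2 * c ^ 2)⁻¹ * ((-(Polynomial.C 9) * Polynomial.X) * p
            + (Polynomial.C 3 * Polynomial.X ^ 2 - Polynomial.C (2 * c))
              * (Polynomial.C 3 * Polynomial.X ^ 2 - Polynomial.C c)) := by ring
        _ = Polynomial.C (2 * c ^ 2)⁻¹ * Polynomial.C (2 * c ^ 2) := by rw [key]
        _ = 1 := by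
            rw [← Polynomial.C_mul,
              inv_mul_cancel₀ (mul_ne_zero (two_ne_zero (α := (LaurentSeries F))) (pow_ne_zero 2 hcne)),
              Polynomial.C_1]
    have hsf : Squarefree p := hsep.squarefree
    have haev : Polynomial.aeval T p = 0 := by
      rw [hpdef,
        map_sub (Polynomial.aeval (R := LaurentSeries F) T) (Polynomial.X ^ 3)
          (Polynomial.C c * Polynomial.X),
        map_mul (Polynomial.aeval (R := LaurentSeries F) T) (Polynomial.C c) Polynomial.X,
        map_pow (Polynomial.aeval (R := LaurentSeries F) T) Polynomial.X 3,
        Polynomial.aeval_X, Polynomial.aeval_C]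
      refine LinearMap.ext (fun m => ?_)
      have hpow : (T ^ 3) m = T (T (T m)) := by
        rw [pow_succ, pow_succ, pow_one]
        rfl
      have halg : (algebraMap (LaurentSeries F) (Module.End (LaurentSeries F) ((LaurentSeries F) ⊗[F] g)) c * T) m = c • T m := by
        rw [Module.algebraMap_end_eq_smul_id]
        rw [Module.End.mul_apply, LinearMap.smul_apply, LinearMap.id_apply]
      rw [LinearMap.sub_apply, LinearMap.zero_apply, hpow, halg, hcubic m, sub_self]
    exact Module.End.isSemisimple_of_squarefree_aeval_eq_zero hsf haev
  exact ⟨hss, hker, hrange, hcompl⟩
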